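/- Let P and Q be polynomials with complex coefficients such that Q is nonzero and squarefree, and such that either P = 0 or deg P ≤ deg Q − 2. Then the sum over the (distinct) complex roots r of Q of P(r)/Q′(r) equals zero, where Q′ denotes the derivative of Q. (In particular, since Q is squarefree, Q′(r) ≠ 0 at every root r of Q.) -/

import Mathlib

open Polynomial

open Finset in
lemma coeff_interpolate_aux {s : Finset ℂ} (_hs : s.Nonempty) (f : ℂ → ℂ) :
    (Lagrange.interpolate s id f).coeff (s.card - 1)
      = ∑ i ∈ s, f i * Lagrange.nodalWeight s id i := by
  rw [Lagrange.interpolate_apply, finset_sum_coeff]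
  refine Finset.sum_congr rfl fun i hi => ?_
  rw [Lagrange.basis_eq_prod_sub_inv_mul_nodal_div hi,
    ← Lagrange.nodal_erase_eq_nodal_div hi, ← mul_assoc, ← C_mul, coeff_C_mul]
  have hdeg : (Lagrange.nodal (s.erase i) (id : ℂ → ℂ)).natDegree = s.card - 1 := by
    rw [Lagrange.natDegree_nodal, Finset.card_erase_of_mem hi]
  have := Lagrange.nodal_monic (s := s.erase i) (v := (id : ℂ → ℂ))
  rw [← hdeg, Polynomial.Monic.coeff_natDegree this, mul_one]

/-- **Univariate global residue theorem.**
If `Q ∈ ℂ[z]` is nonzero and squarefree, and `P = 0` or `deg P ≤ deg Q − 2`,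
then the sum over the distinct roots `r` of `Q` of `P(r)/Q′(r)` vanishes. -/
theorem sum_residues_eq_zero
    (P Q : Polynomial ℂ) (hQ : Q ≠ 0) (hsf : Squarefree Q)
    (hdeg : P = 0 ∨ P.natDegree + 2 ≤ Q.natDegree) :
    ∑ r ∈ Q.roots.toFinset, P.eval r / Q.derivative.eval r = 0 := by
  rcases hdeg with rfl | hdeg
  · simp
  have hsep : Q.Separable := (PerfectField.separable_iff_squarefree).mpr hsf
  have hnd : Q.roots.Nodup := Polynomial.nodup_roots hsep
  have hsplit : Q.Splits := IsAlgClosed.splits Q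
  have hcard : Q.roots.card = Q.natDegree := (splits_iff_card_roots).mp hsplit
  set s := Q.roots.toFinset
  have hsval : s.val = Q.roots := Multiset.dedup_eq_self.mpr hnd
  have hscard : s.card = Q.natDegree := by
    rw [Finset.card_def, hsval, hcard]
  have hinj : Set.InjOn (id : ℂ → ℂ) s := fun a _ b _ h => h
  have hQeq : Q = C Q.leadingCoeff * Lagrange.nodal s id := by
    conv_lhs => rw [hsplit.eq_prod_roots]
    congr 1
    rw [Lagrange.nodal_eq, Finset.prod_eq_multiset_prod, hsval]
    simp
  have hc : Q.leadingCoeff ≠ 0 := leadingCoeff_ne_zero.mpr hQ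
  have hterm : ∀ r ∈ s, P.eval r / Q.derivative.eval r
      = Q.leadingCoeff⁻¹ * (P.eval r * Lagrange.nodalWeight s id r) := by
    intro r hr
    have hW := Lagrange.nodalWeight_eq_eval_derivative_nodal (v := (id : ℂ → ℂ)) hr
    simp only [id_eq] at hW
    have hWne := Lagrange.nodalWeight_ne_zero hinj hr
    have heval : (Lagrange.nodal s id).derivative.eval r
        = (Lagrange.nodalWeight s id r)⁻¹ := by
      rw [hW, inv_inv]
    have : Q.derivative.eval r = Q.leadingCoeff * (Lagrange.nodalWeight s id r)⁻¹ := by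
      conv_lhs => rw [hQeq]
      rw [derivative_C_mul, eval_mul, eval_C, heval]
    rw [this, div_eq_mul_inv, mul_inv, inv_inv]
    ring
  rw [Finset.sum_congr rfl hterm, ← Finset.mul_sum]
  have hsne : s.Nonempty := by
    rw [← Finset.card_pos, hscard]; omega
  have hPinterp : P = Lagrange.interpolate s id fun i => P.eval (id i) :=
    Lagrange.eq_interpolate hinj (by
      calc P.degree ≤ (P.natDegree : WithBot ℕ) := degree_le_natDegree
        _ < (s.card : WithBot ℕ) := by rw [hscard]; exact_mod_cast (by omega : P.natDegree < Q.natDegree))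
  simp only [id_eq] at hPinterp
  have hkey : ∑ i ∈ s, P.eval i * Lagrange.nodalWeight s id i = 0 := by
    rw [← coeff_interpolate_aux hsne, ← hPinterp]
    apply coeff_eq_zero_of_natDegree_lt
    omega
  rw [hkey, mul_zero]
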